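/- arXiv:2506.19043 — 5 statements merged into one kernel-verified Lean document; each statement's English description precedes it below -/
import Mathlib

section
/- Let X be a complete separable median space and let H' be a family of open halfspaces of X (open with respect to the metric topology) such that any two distinct members of H' are either disjoint or transverse. If there exists n ∈ ℕ such that H' contains no family of more than n pairwise transverse halfspaces, then H' is countable. -/
open Set Metric MeasureTheory

/-- The metric interval `[a,b]` in a metric space. -/
def mInterval {X : Type*} [MetricSpace X] (a b : X) : Set X :=
  {c : X | dist a b = dist a c + dist c b}

/-- A median space: each triple of points has a unique median point. -/
def IsMedianSpace (X : Type*) [MetricSpace X] : Prop :=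
  ∀ x y z : X, ∃! m : X, m ∈ mInterval x y ∧ m ∈ mInterval x z ∧ m ∈ mInterval y z

/-- Convexity with respect to metric intervals. -/
def MedConvex {X : Type*} [MetricSpace X] (C : Set X) : Prop :=
  ∀ a ∈ C, ∀ b ∈ C, mInterval a b ⊆ C

/-- A halfspace: a subset such that it and its complement are convex. -/
def IsHalfspace {X : Type*} [MetricSpace X] (h : Set X) : Prop :=
  MedConvex h ∧ MedConvex hᶜ

/-- Two halfspaces are transverse. -/
def Transverse {X : Type*} [MetricSpace X] (h₁ h₂ : Set X) : Prop :=
  (h₁ ∩ h₂).Nonempty ∧ (h₁ ∩ h₂ᶜ).Nonempty ∧ (h₁ᶜ ∩ h₂).Nonempty ∧ (h₁ᶜ ∩ h₂ᶜ).Nonempty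

/-- Finite rank: a uniform bound on families of pairwise transverse halfspaces. -/
def HasFiniteRank (X : Type*) [MetricSpace X] : Prop :=
  ∃ n : ℕ, ∀ H : Set (Set X), (∀ h ∈ H, IsHalfspace h) → H.Pairwise Transverse →
    H.Finite ∧ H.ncard ≤ n

/-- In a complete separable median space, a family of open halfspaces whose
distinct members are pairwise disjoint or transverse, with a uniform bound `n` on the
number of pairwise transverse members, is countable. -/
theorem stmt0 {X : Type*} [MetricSpace X] [CompleteSpace X]
    [TopologicalSpace.SeparableSpace X]
    (hmed : IsMedianSpace X)
    (H' : Set (Set X))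
    (hH' : ∀ h ∈ H', IsHalfspace h ∧ IsOpen h)
    (hdt : ∀ h₁ ∈ H', ∀ h₂ ∈ H', h₁ ≠ h₂ → Disjoint h₁ h₂ ∨ Transverse h₁ h₂)
    (n : ℕ)
    (hn : ∀ T ⊆ H', T.Pairwise Transverse → T.Finite ∧ T.ncard ≤ n) :
    H'.Countable := by
  obtain ⟨D, hDc, hDd⟩ := TopologicalSpace.exists_countable_dense X
  have key : ∀ d : X, {h | h ∈ H' ∧ d ∈ h}.Finite := by
    intro d
    refine (hn _ (fun h hh => hh.1) ?_).1
    intro h1 h1m h2 h2m hne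
    rcases hdt h1 h1m.1 h2 h2m.1 hne with hd | ht
    · exact absurd rfl (hd.ne_of_mem h1m.2 h2m.2)
    · exact ht
  have hsub : H' ⊆ insert ∅ (⋃ d ∈ D, {h | h ∈ H' ∧ d ∈ h}) := by
    intro h hh
    by_cases hne : h.Nonempty
    · obtain ⟨d, hd, hdm⟩ := hDd.exists_mem_open (hH' h hh).2 hne
      exact mem_insert_iff.mpr (Or.inr (mem_biUnion hd ⟨hh, hdm⟩))
    · simp [Set.not_nonempty_iff_eq_empty.mp hne]
  exact ((hDc.biUnion (fun d _ => (key d).countable)).insert ∅).mono hsub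
end

section
/- Let X be a complete separable median space of finite rank and let C ⊆ X be a nonempty proper convex subset. Then the set of closed halfspaces of X that contain C and are minimal with respect to inclusion among all closed halfspaces containing C is nonempty and countable. -/
open Set Metric MeasureTheory

/-- In a complete separable median space of finite rank, for a nonempty proper
convex subset `C`, the set of closed halfspaces containing `C` that are minimal (w.r.t.
inclusion) among closed halfspaces containing `C` is nonempty and countable. -/
theorem stmt1 {X : Type*} [MetricSpace X] [CompleteSpace X]
    [TopologicalSpace.SeparableSpace X]
    (hmed : IsMedianSpace X) (hrank : HasFiniteRank X)
    (C : Set X) (hCne : C.Nonempty) (hCproper : C ≠ Set.univ) (hCconv : MedConvex C) :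
    ({h : Set X | IsHalfspace h ∧ IsClosed h ∧ C ⊆ h ∧
        ∀ h' : Set X, IsHalfspace h' → IsClosed h' → C ⊆ h' → h' ⊆ h → h' = h}).Nonempty ∧
    ({h : Set X | IsHalfspace h ∧ IsClosed h ∧ C ⊆ h ∧
        ∀ h' : Set X, IsHalfspace h' → IsClosed h' → C ⊆ h' → h' ⊆ h → h' = h}).Countable := by
  classical
  set S : Set (Set X) := {h | IsHalfspace h ∧ IsClosed h ∧ C ⊆ h} with hSdef
  have hunivS : (univ : Set X) ∈ S := by
    refine ⟨⟨fun a _ b _ => subset_univ _, fun a ha => absurd (mem_univ a) ha⟩,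
      isClosed_univ, subset_univ _⟩
  set T : Set (Set X) := {h : Set X | IsHalfspace h ∧ IsClosed h ∧ C ⊆ h ∧
      ∀ h' : Set X, IsHalfspace h' → IsClosed h' → C ⊆ h' → h' ⊆ h → h' = h} with hTdef
  constructor
  · -- Nonemptiness via Zorn's lemma.
    obtain ⟨m, hm⟩ := zorn_superset S (by
      intro c hcS hchain
      rcases c.eq_empty_or_nonempty with rfl | hcne
      · exact ⟨univ, hunivS, by simp⟩
      · refine ⟨⋂₀ c, ⟨⟨?_, ?_⟩, ?_, ?_⟩, fun s hs => sInter_subset_of_mem hs⟩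
        · -- convexity of the intersection
          intro a ha b hb x hx s hs
          exact (hcS hs).1.1 a (ha s hs) b (hb s hs) hx
        · -- convexity of the complement (union of a chain of convex sets)
          intro a ha b hb x hx
          rw [mem_compl_iff, mem_sInter] at ha hb ⊢
          push_neg at ha hb ⊢
          obtain ⟨s, hs, has⟩ := ha
          obtain ⟨t, ht, hbt⟩ := hb
          rcases eq_or_ne s t with rfl | hst
          · exact ⟨s, hs, fun hxs => ((hcS hs).1.2 a has b hbt hx) hxs⟩
          · rcases hchain hs ht hst with hsub | hsub
            · exact ⟨s, hs, fun hxs =>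
                ((hcS hs).1.2 a has b (fun h => hbt (hsub h)) hx) hxs⟩
            · exact ⟨t, ht, fun hxt =>
                ((hcS ht).1.2 a (fun h => has (hsub h)) b hbt hx) hxt⟩
        · exact isClosed_sInter fun s hs => (hcS hs).2.1
        · exact subset_sInter fun s hs => (hcS hs).2.2)
    refine ⟨m, hm.1.1, hm.1.2.1, hm.1.2.2, fun h' hh'1 hh'2 hh'3 hsub => ?_⟩
    exact subset_antisymm hsub (hm.2 ⟨hh'1, hh'2, hh'3⟩ hsub)
  · -- Countability via separability and finite rank.
    obtain ⟨D, hDc, hDd⟩ := TopologicalSpace.exists_countable_dense X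
    obtain ⟨n, hn⟩ := hrank
    have hfin : ∀ d : X, ({h ∈ T | d ∉ h}).Finite := by
      intro d
      refine (hn {h ∈ T | d ∉ h} (fun h hh => hh.1.1) ?_).1
      intro h₁ hh₁ h₂ hh₂ hne
      obtain ⟨c, hc⟩ := hCne
      refine ⟨⟨c, hh₁.1.2.2.1 hc, hh₂.1.2.2.1 hc⟩, ?_, ?_, ⟨d, hh₁.2, hh₂.2⟩⟩
      · rw [Set.inter_compl_nonempty_iff]
        intro hsub
        exact hne (hh₂.1.2.2.2 h₁ hh₁.1.1 hh₁.1.2.1 hh₁.1.2.2.1 hsub)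
      · rw [show h₁ᶜ ∩ h₂ = h₂ ∩ h₁ᶜ from inter_comm _ _, Set.inter_compl_nonempty_iff]
        intro hsub
        exact hne (hh₁.1.2.2.2 h₂ hh₂.1.1 hh₂.1.2.1 hh₂.1.2.2.1 hsub).symm
    have hsub : T ⊆ insert univ (⋃ d ∈ D, {h ∈ T | d ∉ h}) := by
      intro h hh
      rcases eq_or_ne h univ with rfl | hne
      · exact mem_insert _ _
      · obtain ⟨d, hdD, hdh⟩ := hDd.exists_mem_open hh.2.1.isOpen_compl
          (nonempty_compl.mpr hne)
        exact mem_insert_iff.mpr (Or.inr (mem_biUnion hdD ⟨hh, hdh⟩))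
    exact Countable.mono hsub
      ((hDc.biUnion fun d _ => (hfin d).countable).insert univ)
end

section
/- Let M be a median algebra, let C ⊆ M be a retract with retraction π_C : M → C, and let C' ⊆ M be a convex subset with C ∩ C' ≠ ∅. Then the image π_C(C') equals C ∩ C'. -/
/-- In a median algebra, if `C` is a retract (with retraction `π`) and `C'` is a
convex subset meeting `C`, then `π '' C' = C ∩ C'`. -/
theorem stmt2 {M : Type*} (m : M → M → M → M)
    (hm1 : ∀ x y : M, m x x y = x)
    (hm2 : ∀ x y z : M, m x y z = m y x z)
    (hm3 : ∀ x y z : M, m x y z = m x z y)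
    (hm4 : ∀ x y z t w : M, m (m x y z) t w = m x (m y t w) (m z t w))
    (C : Set M) (π : M → M)
    (hπC : ∀ x : M, π x ∈ C)
    (hCconv : ∀ a ∈ C, ∀ b ∈ C, {c : M | m a c b = c} ⊆ C)
    (hret : ∀ x : M, ∀ c ∈ C, m x (π x) c = π x)
    (C' : Set M)
    (hC'conv : ∀ a ∈ C', ∀ b ∈ C', {c : M | m a c b = c} ⊆ C')
    (hmeet : (C ∩ C').Nonempty) :
    π '' C' = C ∩ C' := by
  obtain ⟨z, hzC, hzC'⟩ := hmeet
  ext x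
  constructor
  · rintro ⟨y, hy, rfl⟩
    refine ⟨hπC y, ?_⟩
    exact hC'conv y hy z hzC' (hret y z hzC)
  · rintro ⟨hxC, hxC'⟩
    refine ⟨x, hxC', ?_⟩
    have h := hret x x hxC
    rw [hm3, hm1] at h
    exact h.symm
end

section
/- Let (X,d) be a median space. Then the distance function d is a negative definite kernel: for every n ∈ ℕ, all points x₁,…,xₙ ∈ X, and all complex numbers λ₁,…,λₙ with λ₁ + ⋯ + λₙ = 0, the real part of Σ_{i,j=1}^{n} λᵢ · conj(λⱼ) · d(xᵢ,xⱼ) is ≤ 0. -/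
open Set Metric MeasureTheory

namespace MedianND

variable {X : Type*} [MetricSpace X]

theorem mem_mi {a b c : X} : c ∈ mInterval a b ↔ dist a b = dist a c + dist c b := Iff.rfl

theorem mi_symm {a b c : X} (h : c ∈ mInterval a b) : c ∈ mInterval b a := by
  rw [mem_mi] at h ⊢
  rw [dist_comm b a, dist_comm b c, dist_comm c a]
  linarith

theorem mi_left {a b : X} : a ∈ mInterval a b := by
  rw [mem_mi]; simp

theorem mi_right {a b : X} : b ∈ mInterval a b := by
  rw [mem_mi]; simp

theorem t1a {a b c x : X} (hb : b ∈ mInterval a c) (hx : x ∈ mInterval a b) :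
    x ∈ mInterval a c := by
  rw [mem_mi] at *
  have h1 : dist x c ≤ dist x b + dist b c := dist_triangle x b c
  have h2 : dist a c ≤ dist a x + dist x c := dist_triangle a x c
  linarith

theorem t1b {a b c x : X} (hb : b ∈ mInterval a c) (hx : x ∈ mInterval a b) :
    b ∈ mInterval x c := by
  rw [mem_mi] at *
  have h1 : dist x c ≤ dist x b + dist b c := dist_triangle x b c
  have h2 : dist a c ≤ dist a x + dist x c := dist_triangle a x c
  linarith

theorem t1c {a b c x : X} (hb : b ∈ mInterval a c) (hx : x ∈ mInterval b c) :
    x ∈ mInterval a c :=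
  mi_symm (t1a (mi_symm hb) (mi_symm hx))

theorem t1d {a b c x : X} (hb : b ∈ mInterval a c) (hx : x ∈ mInterval b c) :
    b ∈ mInterval a x :=
  mi_symm (t1b (mi_symm hb) (mi_symm hx))

variable (hm : IsMedianSpace X)

noncomputable def med (x y z : X) : X := ((hm x y z).exists).choose

theorem med_spec (x y z : X) :
    med hm x y z ∈ mInterval x y ∧ med hm x y z ∈ mInterval x z ∧ med hm x y z ∈ mInterval y z :=
  ((hm x y z).exists).choose_spec

theorem med_mem₁ (x y z : X) : med hm x y z ∈ mInterval x y := (med_spec hm x y z).1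
theorem med_mem₂ (x y z : X) : med hm x y z ∈ mInterval x z := (med_spec hm x y z).2.1
theorem med_mem₃ (x y z : X) : med hm x y z ∈ mInterval y z := (med_spec hm x y z).2.2

theorem med_uniq {x y z w : X} (h1 : w ∈ mInterval x y) (h2 : w ∈ mInterval x z)
    (h3 : w ∈ mInterval y z) : w = med hm x y z :=
  (hm x y z).unique ⟨h1, h2, h3⟩ (med_spec hm x y z)

theorem med_comm₁₂ (x y z : X) : med hm x y z = med hm y x z :=
  med_uniq hm (mi_symm (med_mem₁ hm x y z)) (med_mem₃ hm x y z) (med_mem₂ hm x y z)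

theorem med_comm₂₃ (x y z : X) : med hm x y z = med hm x z y :=
  med_uniq hm (med_mem₂ hm x y z) (med_mem₁ hm x y z) (mi_symm (med_mem₃ hm x y z))

theorem med_rot (x y z : X) : med hm x y z = med hm y z x := by
  rw [med_comm₁₂, med_comm₂₃]

theorem med_of_mem {x y z : X} (h : z ∈ mInterval x y) : med hm x y z = z :=
  (med_uniq hm h (mi_right (a := x) (b := z)) (mi_right (a := y) (b := z))).symm

/-- Gate lemma: the median `med a b x` lies between `x` and any point of `[a,b]`. -/
theorem gate {a b x y : X} (hy : y ∈ mInterval a b) : med hm a b x ∈ mInterval x y := by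
  set r := med hm a y x with hr
  set s := med hm b r x with hs
  have hrab : r ∈ mInterval a b := t1a hy (med_mem₁ hm a y x)
  have hsab : s ∈ mInterval a b := t1c hrab (mi_symm (med_mem₁ hm b r x))
  have hsax : s ∈ mInterval a x := t1c (med_mem₂ hm a y x) (med_mem₃ hm b r x)
  have hsbx : s ∈ mInterval b x := med_mem₂ hm b r x
  have : s = med hm a b x := med_uniq hm hsab hsax hsbx
  rw [← this]
  exact t1a (mi_symm (med_mem₃ hm a y x)) (mi_symm (med_mem₃ hm b r x))

include hm in
/-- Convexity of intervals. -/
theorem interval_convex {a b u v t : X} (hu : u ∈ mInterval a b) (hv : v ∈ mInterval a b)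
    (ht : t ∈ mInterval u v) : t ∈ mInterval a b := by
  have h1 : med hm a b t ∈ mInterval t u := gate hm hu
  have h2 : med hm a b t ∈ mInterval t v := gate hm hv
  rw [mem_mi] at h1 h2 ht
  have h4 : dist u v ≤ dist u (med hm a b t) + dist (med hm a b t) v := dist_triangle _ _ _
  have e1 : dist u (med hm a b t) = dist (med hm a b t) u := dist_comm _ _
  have e2 : dist u t = dist t u := dist_comm _ _
  have h6 : (0:ℝ) ≤ dist t (med hm a b t) := dist_nonneg
  have h5 : dist t (med hm a b t) = 0 := by linarith
  have : t = med hm a b t := by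
    have := dist_eq_zero.mp h5
    exact this
  rw [this]
  exact med_mem₁ hm a b t

end MedianND

-- Section B: order, meet, join, modularity, localization
namespace MedianND

variable {X : Type*} [MetricSpace X]

/-- The order with basepoint `p`: `x` lies between `p` and `y`. -/
def lep (p x y : X) : Prop := x ∈ mInterval p y

theorem lep_def {p x y : X} : lep p x y ↔ dist p y = dist p x + dist x y := Iff.rfl

theorem lep_refl (p x : X) : lep p x x := mi_right

theorem lep_bot (p x : X) : lep p p x := mi_left

theorem lep_trans {p x y z : X} (h1 : lep p x y) (h2 : lep p y z) : lep p x z := by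
  rw [lep_def] at *
  have t1 : dist x z ≤ dist x y + dist y z := dist_triangle _ _ _
  have t2 : dist p z ≤ dist p x + dist x z := dist_triangle _ _ _
  linarith

theorem lep_antisymm {p x y : X} (h1 : lep p x y) (h2 : lep p y x) : x = y := by
  rw [lep_def] at *
  have : dist x y = 0 := by
    have := dist_comm x y
    linarith
  exact dist_eq_zero.mp this

theorem dist_of_lep {p x y : X} (h : lep p x y) : dist x y = dist p y - dist p x := by
  rw [lep_def] at h; linarith

theorem h_mono {p x y : X} (h : lep p x y) : dist p x ≤ dist p y := by
  rw [lep_def] at h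
  have := dist_nonneg (x := x) (y := y)
  linarith

theorem eq_of_lep_h {p x y : X} (h : lep p x y) (hh : dist p y ≤ dist p x) : x = y := by
  have : dist x y = 0 := by
    have := dist_of_lep h
    have := dist_nonneg (x := x) (y := y)
    linarith
  exact dist_eq_zero.mp this

theorem chain_mem {p a b c : X} (h1 : lep p a b) (h2 : lep p b c) : b ∈ mInterval a c := by
  rw [lep_def] at h1 h2
  rw [mem_mi]
  have t1 : dist a c ≤ dist a b + dist b c := dist_triangle _ _ _
  have t2 : dist p c ≤ dist p a + dist a c := dist_triangle _ _ _
  linarith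

variable (hm : IsMedianSpace X)

/-- Meet with respect to basepoint `p`. -/
noncomputable def mt (p a b : X) : X := med hm p a b

theorem mt_le_left (p a b : X) : lep p (mt hm p a b) a := med_mem₁ hm p a b
theorem mt_le_right (p a b : X) : lep p (mt hm p a b) b := med_mem₂ hm p a b
theorem mt_mem (p a b : X) : mt hm p a b ∈ mInterval a b := med_mem₃ hm p a b

theorem mt_comm (p a b : X) : mt hm p a b = mt hm p b a := med_comm₂₃ hm p a b

theorem le_mt {p a x y : X} (hx : lep p a x) (hy : lep p a y) : lep p a (mt hm p x y) := by
  set m' := med hm a x y with hm'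
  have h1 : m' ∈ mInterval p x := t1c hx (med_mem₁ hm a x y)
  have h2 : a ∈ mInterval p m' := t1d hx (med_mem₁ hm a x y)
  have h3 : m' ∈ mInterval p y := t1c hy (med_mem₂ hm a x y)
  have : m' = med hm p x y := med_uniq hm h1 h3 (med_mem₃ hm a x y)
  rw [mt, ← this]
  exact h2

theorem dist_mt (p a b : X) :
    dist a b = dist p a + dist p b - 2 * dist p (mt hm p a b) := by
  have h1 := mt_mem hm p a b
  rw [mem_mi] at h1
  have h2 := dist_of_lep (mt_le_left hm p a b)
  have h3 := dist_of_lep (mt_le_right hm p a b)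
  have e1 : dist a (mt hm p a b) = dist (mt hm p a b) a := dist_comm _ _
  linarith

theorem mt_eq_left {p a b : X} (h : lep p a b) : mt hm p a b = a :=
  (med_uniq hm (lep_refl p a) h mi_left).symm

theorem mt_eq_right {p a b : X} (h : lep p b a) : mt hm p a b = b := by
  rw [mt_comm]; exact mt_eq_left hm h

theorem mt_self (p a : X) : mt hm p a a = a := mt_eq_left hm (lep_refl p a)

theorem mt_mono_left {p a a' b : X} (h : lep p a a') :
    lep p (mt hm p a b) (mt hm p a' b) :=
  le_mt hm (lep_trans (mt_le_left hm p a b) h) (mt_le_right hm p a b)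

theorem mt_mono_right {p a b b' : X} (h : lep p b b') :
    lep p (mt hm p a b) (mt hm p a b') :=
  le_mt hm (mt_le_left hm p a b) (lep_trans (mt_le_right hm p a b) h)

theorem mt_assoc (p a b c : X) :
    mt hm p (mt hm p a b) c = mt hm p a (mt hm p b c) := by
  apply lep_antisymm
  · apply le_mt hm
    · exact lep_trans (mt_le_left hm p _ c) (mt_le_left hm p a b)
    · apply le_mt hm
      · exact lep_trans (mt_le_left hm p _ c) (mt_le_right hm p a b)
      · exact mt_le_right hm p _ c
  · apply le_mt hm
    · apply le_mt hm
      · exact mt_le_left hm p a _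
      · exact lep_trans (mt_le_right hm p a _) (mt_le_left hm p b c)
    · exact lep_trans (mt_le_right hm p a _) (mt_le_right hm p b c)

theorem mt_absorb {p a b c : X} (h : lep p a b) :
    mt hm p a (mt hm p b c) = mt hm p a c := by
  apply lep_antisymm
  · exact le_mt hm (mt_le_left hm _ _ _)
      (lep_trans (mt_le_right hm p a _) (mt_le_right hm p b c))
  · exact le_mt hm (mt_le_left hm _ _ _)
      (le_mt hm (lep_trans (mt_le_left hm p a c) h) (mt_le_right hm p a c))

-- joins: the join of a,b with upper bound g is mt hm g a b
theorem le_jn {p a b g : X} (ha : lep p a g) (hb : lep p b g) : lep p a (mt hm g a b) := by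
  have h1 : mt hm g a b ∈ mInterval a g := mi_symm (med_mem₁ hm g a b)
  exact t1d ha h1

theorem jn_le_ub' {p a b g : X} (ha : lep p a g) : lep p (mt hm g a b) g := by
  have h1 : mt hm g a b ∈ mInterval a g := mi_symm (med_mem₁ hm g a b)
  exact t1c ha h1

theorem jn_mem (g a b : X) : mt hm g a b ∈ mInterval a b := med_mem₃ hm g a b

theorem jn_indep {p a b g₁ g₂ : X} (ha : lep p a g₁) (hb : lep p b g₁) (hg : lep p g₁ g₂) :
    mt hm g₂ a b = mt hm g₁ a b := by
  have j1 : mt hm g₁ a b ∈ mInterval a g₂ := t1a (chain_mem ha hg) (mi_symm (med_mem₁ hm g₁ a b))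
  have j2 : mt hm g₁ a b ∈ mInterval b g₂ := t1a (chain_mem hb hg) (mi_symm (med_mem₂ hm g₁ a b))
  exact (med_uniq hm (mi_symm j1) (mi_symm j2) (jn_mem hm g₁ a b)).symm

theorem jn_lub {p a b g u : X} (ha : lep p a g) (hb : lep p b g)
    (hua : lep p a u) (hub : lep p b u) : lep p (mt hm g a b) u := by
  have hw1 : lep p a (mt hm p u g) := le_mt hm hua ha
  have hw2 : lep p b (mt hm p u g) := le_mt hm hub hb
  have : mt hm g a b = mt hm (mt hm p u g) a b := jn_indep hm hw1 hw2 (mt_le_right hm p u g)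
  rw [this]
  exact lep_trans (jn_le_ub' hm hw1) (mt_le_left hm p u g)

/-- Modularity. -/
theorem modular {p a b g : X} (ha : lep p a g) (hb : lep p b g) :
    dist p (mt hm g a b) + dist p (mt hm p a b) = dist p a + dist p b := by
  set q := mt hm p a b with hq
  set j := mt hm g a b with hj
  have haj : lep p a j := le_jn hm ha hb
  have hbj : lep p b j := by rw [hj, mt_comm]; exact le_jn hm hb ha
  -- a ∈ [q,j]
  have key : ∀ c d : X, lep p c g → lep p d g →
      c ∈ mInterval (mt hm p c d) (mt hm g c d) := by
    intro c d hcg hdg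
    have hqc : lep p (mt hm p c d) c := mt_le_left hm p c d
    have hcj : lep p c (mt hm g c d) := le_jn hm hcg hdg
    set q' := mt hm p c d
    set j' := mt hm g c d
    set μ := med hm q' j' c with hμ
    have m1 : μ ∈ mInterval p c := t1c hqc (med_mem₂ hm q' j' c)
    have m2 : μ ∈ mInterval c g := by
      have : j' ∈ mInterval c g := mi_symm (med_mem₁ hm g c d)
      exact t1a this (mi_symm (med_mem₃ hm q' j' c))
    have m3 : μ ∈ mInterval p g := t1a hcg m1
    have e1 : μ = med hm p g c := med_uniq hm m3 m1 (mi_symm m2)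
    have e2 : c = med hm p g c := med_uniq hm hcg (lep_refl p c) mi_right
    have : μ = c := by rw [e1, ← e2]
    rw [← this]
    exact med_mem₁ hm q' j' c
  have ha' : a ∈ mInterval q j := key a b ha hb
  have hb' : b ∈ mInterval q j := by
    have h1 := key b a hb ha
    rwa [mt_comm hm p b a, mt_comm hm g b a] at h1
  have hqab : q ∈ mInterval a b := mt_mem hm p a b
  have hjab : j ∈ mInterval a b := jn_mem hm g a b
  rw [mem_mi] at ha' hb' hqab hjab
  -- rectangle algebra
  have r1 : dist q a + dist a j = dist q b + dist b j := by
    rw [ha'] at hb'; linarith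
  have r2 : dist a q + dist q b = dist a j + dist j b := by
    rw [hqab] at hjab; linarith
  have e3 : dist a q = dist q a := dist_comm _ _
  have e4 : dist b j = dist j b := dist_comm _ _
  have r3 : dist a j = dist q b := by linarith
  have d1 : dist a j = dist p j - dist p a := dist_of_lep haj
  have d2 : dist q b = dist p b - dist p q := dist_of_lep (mt_le_right hm p a b)
  rw [hq, hj] at *
  linarith

/-- Localization lemma, part 1 : if `w ∈ [y,z]` then `y ∧ z ≤ w`. -/
theorem lemloc_parts {p y z w : X} (hw : w ∈ mInterval y z) :
    lep p (mt hm p y z) w ∧ mt hm w (mt hm p y w) (mt hm p z w) = w := by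
  set a := mt hm p y w with hA
  set b := mt hm p z w with hB
  have haw : lep p a w := mt_le_right hm p y w
  have hbw : lep p b w := mt_le_right hm p z w
  set j := mt hm w a b with hj
  have hyz := hw
  rw [mem_mi] at hyz
  have dy := dist_mt hm p y w
  have dz := dist_mt hm p z w
  have dyz := dist_mt hm p y z
  have e1 : dist w z = dist z w := dist_comm _ _
  -- E1 : h a + h b = h w + h (y ∧ z)
  have E1 : dist p a + dist p b = dist p w + dist p (mt hm p y z) := by
    rw [hA, hB]; linarith
  have mab : mt hm p a b = mt hm p (mt hm p y z) w := by
    rw [hA, hB]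
    rw [mt_assoc hm p y w (mt hm p z w)]
    rw [mt_comm hm p w (mt hm p z w), mt_assoc hm p z w w, mt_self hm p w]
    rw [← mt_assoc hm p y z w]
  have E2 := modular hm haw hbw
  rw [mab] at E2
  have i1 : dist p (mt hm w a b) ≤ dist p w := h_mono (jn_le_ub' hm haw)
  have i2 : dist p (mt hm p (mt hm p y z) w) ≤ dist p (mt hm p y z) :=
    h_mono (mt_le_left hm p _ w)
  have q1 : dist p (mt hm w a b) = dist p w := by linarith
  have q2 : dist p (mt hm p (mt hm p y z) w) = dist p (mt hm p y z) := by linarith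
  constructor
  · have : mt hm p (mt hm p y z) w = mt hm p y z :=
      eq_of_lep_h (mt_le_left hm p _ w) (le_of_eq q2.symm)
    have h2 : lep p (mt hm p (mt hm p y z) w) w := mt_le_right hm p _ w
    rwa [this] at h2
  · exact eq_of_lep_h (jn_le_ub' hm haw) (le_of_eq q1.symm)

theorem lemloc1 {p y z w : X} (hw : w ∈ mInterval y z) : lep p (mt hm p y z) w :=
  (lemloc_parts hm hw).1

theorem lemloc2 {p y z w : X} (hw : w ∈ mInterval y z) :
    mt hm w (mt hm p y w) (mt hm p z w) = w :=
  (lemloc_parts hm hw).2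

end MedianND

-- Section C: star lemma, case G, MAIN distributivity
namespace MedianND

variable {X : Type*} [MetricSpace X] (hm : IsMedianSpace X)

include hm in
theorem star2 {P w α β Γ : X} (h1 : P ∈ mInterval w α) (h2 : P ∈ mInterval w β)
    (h3 : P ∈ mInterval α β) (h4 : Γ ∈ mInterval α β) (h5 : w ∈ mInterval P Γ) : w = P := by
  set g := med hm w α β with hgdef
  have gwα : g ∈ mInterval w α := med_mem₁ hm w α β
  have gwβ : g ∈ mInterval w β := med_mem₂ hm w α β
  have gαβ : g ∈ mInterval α β := med_mem₃ hm w α β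
  rw [mem_mi] at h1 h2 h3 gwα gwβ gαβ
  have cPw : dist w P = dist P w := dist_comm _ _
  have cαP : dist α P = dist P α := dist_comm _ _
  have cαg : dist α g = dist g α := dist_comm _ _
  have dwg : dist w g = dist P w := by linarith
  have dgα : dist g α = dist P α := by linarith
  have dgβ : dist g β = dist P β := by linarith
  -- gate
  have ggate : g ∈ mInterval w Γ := by
    have := gate hm (x := w) h4
    rwa [hgdef, med_rot hm w α β]
  have h5' := h5
  rw [mem_mi] at h5' ggate
  have dgΓ : dist g Γ = dist P Γ - 2 * dist P w := by linarith
  have dm1 := dist_mt hm P g Γ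
  have i1 : dist P (mt hm P g Γ) ≤ dist P g := h_mono (mt_le_left hm P g Γ)
  have hg2w : dist P g ≥ 2 * dist P w := by linarith
  have dm2 := dist_mt hm P w g
  have i2 : dist P (mt hm P w g) ≤ dist P w := h_mono (mt_le_left hm P w g)
  have hgeq : dist P g = 2 * dist P w := by linarith
  have hwg : mt hm P w g = w := by
    apply eq_of_lep_h (mt_le_left hm P w g)
    linarith
  have hlewg : lep P w g := by
    have := mt_le_right hm P w g
    rwa [hwg] at this
  -- heights of a', b'
  set a' := mt hm P g α with ha'
  set b' := mt hm P g β with hb'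
  have dm3 := dist_mt hm P g α
  have dm4 := dist_mt hm P g β
  have hHa : dist P a' = dist P w := by rw [ha']; linarith
  have hHb : dist P b' = dist P w := by rw [hb']; linarith
  -- meets equal to P
  have mtwα : mt hm P w α = P := by
    have := dist_mt hm P w α
    have h0 : dist P (mt hm P w α) = 0 := by linarith
    exact (dist_eq_zero.mp h0).symm
  have mtwβ : mt hm P w β = P := by
    have := dist_mt hm P w β
    have h0 : dist P (mt hm P w β) = 0 := by linarith
    exact (dist_eq_zero.mp h0).symm
  have mtαβ : mt hm P α β = P := by
    have := dist_mt hm P α β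
    have h0 : dist P (mt hm P α β) = 0 := by linarith
    exact (dist_eq_zero.mp h0).symm
  have mtwa : mt hm P w a' = P := by
    apply lep_antisymm (h2 := lep_bot P _)
    have k1 : lep P (mt hm P w a') (mt hm P w α) :=
      mt_mono_right hm (mt_le_right hm P g α)
    rwa [mtwα] at k1
  have mtwb : mt hm P w b' = P := by
    apply lep_antisymm (h2 := lep_bot P _)
    have k1 : lep P (mt hm P w b') (mt hm P w β) :=
      mt_mono_right hm (mt_le_right hm P g β)
    rwa [mtwβ] at k1
  have mtab : mt hm P a' b' = P := by
    apply lep_antisymm (h2 := lep_bot P _)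
    have k1 : lep P (mt hm P a' b') (mt hm P α b') :=
      mt_mono_left hm (mt_le_right hm P g α)
    have k2 : lep P (mt hm P α b') (mt hm P α β) :=
      mt_mono_right hm (mt_le_right hm P g β)
    have := lep_trans k1 k2
    rwa [mtαβ] at this
  have hP0 : dist P P = 0 := dist_self P
  -- memberships for P
  have Pwa : P ∈ mInterval w a' := by
    rw [mem_mi]
    have := dist_mt hm P w a'
    rw [mtwa, hP0] at this
    rw [dist_comm w P]
    linarith
  have Pwb : P ∈ mInterval w b' := by
    rw [mem_mi]
    have := dist_mt hm P w b'
    rw [mtwb, hP0] at this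
    rw [dist_comm w P]
    linarith
  have Pab : P ∈ mInterval a' b' := by
    rw [mem_mi]
    have := dist_mt hm P a' b'
    rw [mtab, hP0] at this
    rw [dist_comm a' P]
    linarith
  -- memberships for g
  have gab : g ∈ mInterval a' b' := by
    have k := lemloc2 hm (p := P) gαβ
    rw [← mt_comm hm P g α, ← mt_comm hm P g β] at k
    rw [← ha', ← hb'] at k
    have := jn_mem hm g a' b'
    rwa [k] at this
  have gwa : g ∈ mInterval w a' := by
    rw [mem_mi]
    have e1 : dist w a' = 2 * dist P w := by
      have := dist_mt hm P w a'
      rw [mtwa, hP0] at this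
      linarith
    have e2 : dist a' g = dist P g - dist P a' := dist_of_lep (mt_le_left hm P g α)
    rw [dist_comm a' g] at e2
    linarith [dwg]
  have gwb : g ∈ mInterval w b' := by
    rw [mem_mi]
    have e1 : dist w b' = 2 * dist P w := by
      have := dist_mt hm P w b'
      rw [mtwb, hP0] at this
      linarith
    have e2 : dist b' g = dist P g - dist P b' := dist_of_lep (mt_le_left hm P g β)
    rw [dist_comm b' g] at e2
    linarith [dwg]
  have hPmed : P = med hm w a' b' := med_uniq hm Pwa Pwb Pab
  have hgmed : g = med hm w a' b' := med_uniq hm gwa gwb gab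
  have hPg : P = g := hPmed.trans hgmed.symm
  have hPg0 : dist P g = 0 := by rw [← hPg]; exact dist_self P
  have hPw0 : dist P w = 0 := by linarith
  exact (dist_eq_zero.mp hPw0).symm

theorem caseG {p α β g t : X} (ha : lep p α g) (hb : lep p β g) (hg : g ∈ mInterval α β)
    (hgate : med hm t α β = g) :
    dist p (mt hm p α t) + dist p (mt hm p β t)
      = dist p (mt hm p g t) + dist p (mt hm p (mt hm p α β) t) := by
  set ζ := mt hm p g t with hζ
  set q := mt hm p α β with hqd
  have G1 : g ∈ mInterval t α := by rw [← hgate]; exact med_mem₁ hm t α β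
  have G2 : g ∈ mInterval t β := by rw [← hgate]; exact med_mem₂ hm t α β
  have jα : mt hm g ζ α = g := by
    have k := lemloc2 hm (p := p) G1
    rwa [mt_comm hm p t g, ← hζ, mt_eq_left hm ha] at k
  have jβ : mt hm g ζ β = g := by
    have k := lemloc2 hm (p := p) G2
    rwa [mt_comm hm p t g, ← hζ, mt_eq_left hm hb] at k
  have hqα : lep p q α := mt_le_left hm p α β
  have hqβ : lep p q β := mt_le_right hm p α β
  have hqg : lep p q g := lep_trans hqα ha
  have hζg : lep p ζ g := mt_le_left hm p g t
  set w := mt hm g ζ q with hwd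
  have hqw : lep p q w := by
    have := le_jn hm (p := p) hqg hζg
    rwa [mt_comm hm g q ζ] at this
  have hwg : lep p w g := jn_le_ub' hm hζg
  have hstepα : mt hm g w α = g := by
    rw [hwd, mt_assoc hm g ζ q α]
    have : mt hm g q α = α := mt_eq_right hm (mi_symm (chain_mem hqα ha))
    rw [this, jα]
  have hstepβ : mt hm g w β = g := by
    rw [hwd, mt_assoc hm g ζ q β]
    have : mt hm g q β = β := mt_eq_right hm (mi_symm (chain_mem hqβ hb))
    rw [this, jβ]
  have hweq : w = g := by
    apply star2 hm (α := α) (β := β) (Γ := q)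
    · have := jn_mem hm g w α
      rwa [hstepα] at this
    · have := jn_mem hm g w β
      rwa [hstepβ] at this
    · exact hg
    · exact mt_mem hm p α β
    · exact mi_symm (chain_mem hqw hwg)
  -- modular identities
  have Eq1 : dist p g + dist p (mt hm p t q) = dist p ζ + dist p q := by
    have m := modular hm hζg hqg
    rw [← hwd, hweq] at m
    have e : mt hm p ζ q = mt hm p t q := by
      rw [hζ, mt_assoc hm p g t q]
      exact mt_eq_right hm (lep_trans (mt_le_right hm p t q) hqg)
    rw [e] at m
    linarith
  have Eα : dist p g + dist p (mt hm p α t) = dist p ζ + dist p α := by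
    have m := modular hm hζg ha
    rw [jα] at m
    have e : mt hm p ζ α = mt hm p α t := by
      rw [hζ, mt_comm hm p g t, mt_assoc hm p t g α]
      rw [mt_eq_right hm ha, mt_comm hm p t α]
    rw [e] at m
    linarith
  have Eβ : dist p g + dist p (mt hm p β t) = dist p ζ + dist p β := by
    have m := modular hm hζg hb
    rw [jβ] at m
    have e : mt hm p ζ β = mt hm p β t := by
      rw [hζ, mt_comm hm p g t, mt_assoc hm p t g β]
      rw [mt_eq_right hm hb, mt_comm hm p t β]
    rw [e] at m
    linarith
  have Eg : dist p g + dist p q = dist p α + dist p β := by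
    have m := modular hm ha hb
    have e : mt hm g α β = g := by
      rw [mt]
      rw [med_rot hm g α β]
      exact med_of_mem hm hg
    rw [e, ← hqd] at m
    linarith
  have ef : mt hm p q t = mt hm p t q := mt_comm hm p q t
  rw [ef]
  linarith

theorem mt_mt_mt (p u v w : X) :
    mt hm p (mt hm p u w) (mt hm p v w) = mt hm p (mt hm p u v) w := by
  apply lep_antisymm
  · apply le_mt hm
    · apply le_mt hm
      · exact lep_trans (mt_le_left hm p _ _) (mt_le_left hm p u w)
      · exact lep_trans (mt_le_right hm p _ _) (mt_le_left hm p v w)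
    · exact lep_trans (mt_le_left hm p _ _) (mt_le_right hm p u w)
  · apply le_mt hm
    · apply le_mt hm
      · exact lep_trans (mt_le_left hm p _ _) (mt_le_left hm p u v)
      · exact mt_le_right hm p _ w
    · apply le_mt hm
      · exact lep_trans (mt_le_left hm p _ _) (mt_le_right hm p u v)
      · exact mt_le_right hm p _ w

/-- MAIN: the modular-distributive identity `h(α∧t)+h(β∧t) = h((α∨β)∧t)+h((α∧β)∧t)`. -/
theorem main {p α β g : X} (ha : lep p α g) (hb : lep p β g) (hg : g ∈ mInterval α β)
    (t : X) :
    dist p (mt hm p α t) + dist p (mt hm p β t)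
      = dist p (mt hm p g t) + dist p (mt hm p (mt hm p α β) t) := by
  set τ := med hm t α β with hτd
  set q := mt hm p α β with hqd
  have hταβ : τ ∈ mInterval α β := med_mem₃ hm t α β
  have hτtα : τ ∈ mInterval t α := med_mem₁ hm t α β
  have hτtβ : τ ∈ mInterval t β := med_mem₂ hm t α β
  have hτg : lep p τ g := interval_convex hm ha hb hταβ
  -- S3 : τ ∈ [t,g]
  have S3 : τ ∈ mInterval t g := by
    have := lemloc1 hm (p := t) hg
    rwa [mt, ← hτd] at this
  -- S4 : heights of ζ and ρ agree, so ρ = ζ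
  have S4 : mt hm p τ t = mt hm p g t := by
    have h1 := S3
    rw [mem_mi] at h1
    have d1 := dist_mt hm p g t
    have d2 := dist_mt hm p τ t
    have d3 : dist τ g = dist p g - dist p τ := dist_of_lep hτg
    have c1 : dist t g = dist g t := dist_comm _ _
    have c2 : dist t τ = dist τ t := dist_comm _ _
    have hh : dist p (mt hm p g t) ≤ dist p (mt hm p τ t) := by linarith
    exact eq_of_lep_h (mt_mono_left hm hτg) hh
  -- S5
  have S5α : lep p (mt hm p α t) τ := by
    have := lemloc1 hm (p := p) hτtα
    rwa [mt_comm hm p t α] at this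
  have S5β : lep p (mt hm p β t) τ := by
    have := lemloc1 hm (p := p) hτtβ
    rwa [mt_comm hm p t β] at this
  -- S6
  have S6 : lep p q τ := by
    have := lemloc1 hm (p := p) hταβ
    rwa [← hqd] at this
  set α₁ := mt hm p τ α with hα₁
  set β₁ := mt hm p τ β with hβ₁
  have jj : mt hm τ α₁ β₁ = τ := by
    have k := lemloc2 hm (p := p) hταβ
    rwa [mt_comm hm p α τ, mt_comm hm p β τ, ← hα₁, ← hβ₁] at k
  -- S7 : gate for the small pair
  have hτα₁β₁ : τ ∈ mInterval α₁ β₁ := by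
    have := jn_mem hm τ α₁ β₁
    rwa [jj] at this
  have hτtα₁ : τ ∈ mInterval t α₁ := t1d hτtα (mt_mem hm p τ α)
  have hτtβ₁ : τ ∈ mInterval t β₁ := t1d hτtβ (mt_mem hm p τ β)
  have S7 : med hm t α₁ β₁ = τ := (med_uniq hm hτtα₁ hτtβ₁ hτα₁β₁).symm
  -- S8 : case G for the small pair
  have S8 := caseG hm (mt_le_left hm p τ α) (mt_le_left hm p τ β) hτα₁β₁ S7
  -- S9
  have S9α : mt hm p α₁ t = mt hm p α t := by
    rw [hα₁, mt_assoc hm p τ α t, mt_comm hm p τ (mt hm p α t)]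
    exact mt_eq_left hm S5α
  have S9β : mt hm p β₁ t = mt hm p β t := by
    rw [hβ₁, mt_assoc hm p τ β t, mt_comm hm p τ (mt hm p β t)]
    exact mt_eq_left hm S5β
  -- S10
  have S10 : mt hm p α₁ β₁ = q := by
    apply lep_antisymm
    · apply le_mt hm
      · exact lep_trans (mt_le_left hm p α₁ β₁) (mt_le_right hm p τ α)
      · exact lep_trans (mt_le_right hm p α₁ β₁) (mt_le_right hm p τ β)
    · apply le_mt hm
      · exact le_mt hm S6 (mt_le_left hm p α β)
      · exact le_mt hm S6 (mt_le_right hm p α β)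
  rw [S9α, S9β, S10, S4] at S8
  exact S8

/-- Distributivity, element form: `(u ∨ v) ∧ w = (u ∧ w) ∨ (v ∧ w)` (join under `s`). -/
theorem dist_jn_mt {p s u v : X} (hu : lep p u s) (hv : lep p v s) (w : X) :
    mt hm p (mt hm s u v) w = mt hm s (mt hm p u w) (mt hm p v w) := by
  set j := mt hm s u v with hj
  have hju : lep p u j := le_jn hm hu hv
  have hjv : lep p v j := by
    have := le_jn hm hv hu
    rwa [mt_comm hm s v u, ← hj] at this
  have hjs : lep p j s := jn_le_ub' hm hu
  have hjmem : j ∈ mInterval u v := jn_mem hm s u v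
  have huw : lep p (mt hm p u w) s := lep_trans (mt_le_left hm p u w) hu
  have hvw : lep p (mt hm p v w) s := lep_trans (mt_le_left hm p v w) hv
  have hRle : lep p (mt hm s (mt hm p u w) (mt hm p v w)) (mt hm p j w) := by
    apply jn_lub hm huw hvw
    · exact le_mt hm (lep_trans (mt_le_left hm p u w) hju) (mt_le_right hm p u w)
    · exact le_mt hm (lep_trans (mt_le_left hm p v w) hjv) (mt_le_right hm p v w)
  have hmod := modular hm huw hvw
  rw [mt_mt_mt hm p u v w] at hmod
  have hmain := main hm hju hjv hjmem w
  have hh : dist p (mt hm p j w) ≤ dist p (mt hm s (mt hm p u w) (mt hm p v w)) := by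
    linarith
  exact (eq_of_lep_h hRle hh).symm

end MedianND

-- Section D: folds of meets, complete monotonicity (CM)
namespace MedianND

variable {X : Type*} [MetricSpace X] (hm : IsMedianSpace X) (p : X)

theorem mt_left_comm (a b c : X) :
    mt hm p a (mt hm p b c) = mt hm p b (mt hm p a c) := by
  rw [← mt_assoc hm p a b c, mt_comm hm p a b, mt_assoc hm p b a c]

def mtComm : Std.Commutative (mt hm p) := ⟨fun a b => mt_comm hm p a b⟩
def mtAssoc : Std.Associative (mt hm p) := ⟨fun a b c => mt_assoc hm p a b c⟩

variable {ι : Type*} [DecidableEq ι] (t : ι → X)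

/-- `mfold s E = s ∧ ⋀_{i ∈ E} t i`. -/
noncomputable def mfold (s : X) (E : Finset ι) : X :=
  @Finset.fold ι X (mt hm p) (mtComm hm p) (mtAssoc hm p) s t E

theorem mfold_empty (s : X) : mfold hm p t s ∅ = s := rfl

theorem mfold_insert {a : ι} {E : Finset ι} (h : a ∉ E) (s : X) :
    mfold hm p t s (insert a E) = mt hm p (t a) (mfold hm p t s E) := by
  haveI := mtComm hm p
  haveI := mtAssoc hm p
  exact Finset.fold_insert h

theorem mfold_le (s : X) (E : Finset ι) : lep p (mfold hm p t s E) s := by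
  induction E using Finset.induction_on with
  | empty => exact lep_refl p s
  | @insert _ _ ha ih =>
    rw [mfold_insert hm p t ha]
    exact lep_trans (mt_le_right hm p _ _) ih

theorem mfold_pull (w s : X) (E : Finset ι) :
    mt hm p w (mfold hm p t s E) = mfold hm p t (mt hm p w s) E := by
  induction E using Finset.induction_on with
  | empty => rfl
  | @insert _ _ ha ih =>
    rw [mfold_insert hm p t ha, mfold_insert hm p t ha, mt_left_comm hm p, ih]

/-- Lift of the base-`s` meet (join below `s`) to `Option X`. -/
noncomputable def omt (s : X) : Option X → Option X → Option X :=
  fun a b => match a, b with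
  | none, b => b
  | some a, none => some a
  | some a, some b => some (mt hm s a b)

def omtComm (s : X) : Std.Commutative (omt hm s) := by
  constructor
  intro a b
  match a, b with
  | none, none => rfl
  | none, some b => rfl
  | some a, none => rfl
  | some a, some b => show some (mt hm s a b) = some (mt hm s b a); rw [mt_comm]

def omtAssoc (s : X) : Std.Associative (omt hm s) := by
  constructor
  intro a b c
  match a, b, c with
  | none, b, c => rfl
  | some a, none, c => rfl
  | some a, some b, none => rfl
  | some a, some b, some c =>
      show some (mt hm s (mt hm s a b) c) = some (mt hm s a (mt hm s b c))
      rw [mt_assoc]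

/-- `jpO s T = some (⋁_{i ∈ T} (s ∧ t i))` (join below `s`), or `none` if `T = ∅`. -/
noncomputable def jpO (s : X) (T : Finset ι) : Option X :=
  @Finset.fold ι (Option X) (omt hm s) (omtComm hm s) (omtAssoc hm s)
    none (fun i => some (mt hm p s (t i))) T

theorem jpO_empty (s : X) : jpO hm p t s ∅ = none := rfl

theorem jpO_insert {a : ι} {T : Finset ι} (h : a ∉ T) (s : X) :
    jpO hm p t s (insert a T) = omt hm s (some (mt hm p s (t a))) (jpO hm p t s T) := by
  haveI := omtComm hm s
  haveI := omtAssoc hm s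
  exact Finset.fold_insert h

theorem jpO_ne (s : X) (T : Finset ι) (hT : T.Nonempty) :
    ∃ J, jpO hm p t s T = some J := by
  induction T using Finset.induction_on with
  | empty => exact absurd hT (by simp)
  | @insert a T ha ih =>
    rw [jpO_insert hm p t ha]
    rcases Finset.eq_empty_or_nonempty T with h | h
    · subst h; exact ⟨mt hm p s (t a), rfl⟩
    · obtain ⟨J, hJ⟩ := ih h
      rw [hJ]
      exact ⟨mt hm s (mt hm p s (t a)) J, rfl⟩

theorem jpO_le (s : X) (T : Finset ι) {J : X} (hJ : jpO hm p t s T = some J) :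
    lep p J s := by
  induction T using Finset.induction_on generalizing J with
  | empty => simp [jpO_empty] at hJ
  | @insert a T ha ih =>
    rw [jpO_insert hm p t ha] at hJ
    rcases Finset.eq_empty_or_nonempty T with h | h
    · subst h
      rw [jpO_empty] at hJ
      have : mt hm p s (t a) = J := by
        simpa [omt] using hJ
      rw [← this]
      exact mt_le_left hm p s (t a)
    · obtain ⟨J₀, hJ₀⟩ := jpO_ne hm p t s T h
      rw [hJ₀] at hJ
      have : mt hm s (mt hm p s (t a)) J₀ = J := by
        simpa [omt] using hJ
      rw [← this]
      exact jn_le_ub' hm (mt_le_left hm p s (t a))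

theorem jp_meet (s : X) (T : Finset ι) (w : X) {J : X} (hJ : jpO hm p t s T = some J) :
    jpO hm p t (mt hm p s w) T = some (mt hm p J w) := by
  induction T using Finset.induction_on generalizing J with
  | empty => simp [jpO_empty] at hJ
  | @insert a T ha ih =>
    rw [jpO_insert hm p t ha] at hJ
    rw [jpO_insert hm p t ha]
    have base : mt hm p (mt hm p s w) (t a) = mt hm p (mt hm p s (t a)) w := by
      rw [mt_assoc hm p s w (t a), mt_assoc hm p s (t a) w, mt_comm hm p w (t a)]
    rcases Finset.eq_empty_or_nonempty T with h | h
    · subst h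
      rw [jpO_empty] at hJ ⊢
      have hJ' : mt hm p s (t a) = J := by simpa [omt] using hJ
      show some (mt hm p (mt hm p s w) (t a)) = some (mt hm p J w)
      rw [base, hJ']
    · obtain ⟨J₀, hJ₀⟩ := jpO_ne hm p t s T h
      rw [hJ₀] at hJ
      have hJ' : mt hm s (mt hm p s (t a)) J₀ = J := by simpa [omt] using hJ
      rw [ih hJ₀]
      have hu : lep p (mt hm p s (t a)) s := mt_le_left hm p s (t a)
      have hJ₀s : lep p J₀ s := jpO_le hm p t s T hJ₀
      show some (mt hm (mt hm p s w) (mt hm p (mt hm p s w) (t a)) (mt hm p J₀ w))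
          = some (mt hm p J w)
      congr 1
      rw [← hJ']
      rw [dist_jn_mt hm hu hJ₀s w]
      rw [base]
      -- now goal: mt hm (mt p s w) (mt p (mt p s (t a)) w) (mt p J₀ w)
      --        = mt hm s (mt p (mt p s (t a)) w) (mt p J₀ w)
      have hA : lep p (mt hm p (mt hm p s (t a)) w) (mt hm p s w) :=
        le_mt hm (lep_trans (mt_le_left hm p _ w) hu) (mt_le_right hm p _ w)
      have hB : lep p (mt hm p J₀ w) (mt hm p s w) :=
        le_mt hm (lep_trans (mt_le_left hm p _ w) hJ₀s) (mt_le_right hm p _ w)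
      exact (jn_indep hm hA hB (mt_le_left hm p s w)).symm

/-- Complete monotonicity: the alternating sum equals `h(s) - h(join)` and is `≥ 0`. -/
theorem CM (s : X) (T : Finset ι) {J : X} (hJ : jpO hm p t s T = some J) :
    (∑ E ∈ T.powerset, (-1 : ℝ) ^ E.card * dist p (mfold hm p t s E))
      = dist p s - dist p J := by
  induction T using Finset.induction_on generalizing s J with
  | empty => simp [jpO_empty] at hJ
  | @insert a T ha ih =>
    rw [jpO_insert hm p t ha] at hJ
    rw [Finset.sum_powerset_insert ha]
    have hcard : ∀ E ∈ T.powerset, ((insert a E).card : ℕ) = E.card + 1 := by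
      intro E hE
      rw [Finset.mem_powerset] at hE
      exact Finset.card_insert_of_notMem (fun hc => ha (hE hc))
    have hterm : ∀ E ∈ T.powerset,
        (-1 : ℝ) ^ (insert a E).card * dist p (mfold hm p t s (insert a E))
          = -((-1 : ℝ) ^ E.card * dist p (mfold hm p t (mt hm p (t a) s) E)) := by
      intro E hE
      rw [Finset.mem_powerset] at hE
      have haE : a ∉ E := fun hc => ha (hE hc)
      rw [mfold_insert hm p t haE, mfold_pull hm p t,
        Finset.card_insert_of_notMem haE]
      ring
    rw [Finset.sum_congr rfl hterm, Finset.sum_neg_distrib]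
    set s' := mt hm p (t a) s with hs'
    have hs'c : s' = mt hm p s (t a) := mt_comm hm p (t a) s
    rcases Finset.eq_empty_or_nonempty T with h | h
    · subst h
      rw [jpO_empty] at hJ
      have hJ' : mt hm p s (t a) = J := by simpa [omt] using hJ
      simp only [Finset.powerset_empty, Finset.sum_singleton, Finset.card_empty, pow_zero,
        one_mul, mfold_empty]
      rw [hs'c, hJ']
      ring
    · obtain ⟨J₀, hJ₀⟩ := jpO_ne hm p t s T h
      rw [hJ₀] at hJ
      have hJ' : mt hm s (mt hm p s (t a)) J₀ = J := by simpa [omt] using hJ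
      have hJ₁ : jpO hm p t s' T = some (mt hm p J₀ (t a)) := by
        rw [hs'c]
        exact jp_meet hm p t s T (t a) hJ₀
      rw [ih s hJ₀, ih s' hJ₁]
      have hu : lep p (mt hm p s (t a)) s := mt_le_left hm p s (t a)
      have hJ₀s : lep p J₀ s := jpO_le hm p t s T hJ₀
      have hmod := modular hm hu hJ₀s
      rw [hJ'] at hmod
      have hmm : mt hm p (mt hm p s (t a)) J₀ = mt hm p J₀ (t a) := by
        apply lep_antisymm
        · exact le_mt hm (mt_le_right hm p _ _)
            (lep_trans (mt_le_left hm p _ _) (mt_le_right hm p s (t a)))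
        · apply le_mt hm
          · exact le_mt hm (lep_trans (mt_le_left hm p J₀ (t a)) hJ₀s)
              (mt_le_right hm p J₀ (t a))
          · exact mt_le_left hm p J₀ (t a)
      rw [hmm] at hmod
      rw [hs'c]
      linarith

end MedianND

-- Section E: finite meets of a family, Möbius inversion, PSD
namespace MedianND

variable {X : Type*} [MetricSpace X] (hm : IsMedianSpace X) (p : X)
variable {n : ℕ} (x : Fin n → X)

/-- Option-valued meet over a finset of the family. -/
noncomputable def xAO (A : Finset (Fin n)) : Option X :=
  @Finset.fold (Fin n) (Option X) (omt hm p) (omtComm hm p) (omtAssoc hm p)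
    none (fun i => some (x i)) A

noncomputable def xA (A : Finset (Fin n)) : X := (xAO hm p x A).getD p

theorem xAO_empty : xAO hm p x ∅ = none := rfl

theorem xAO_insert {a : Fin n} {A : Finset (Fin n)} (h : a ∉ A) :
    xAO hm p x (insert a A) = omt hm p (some (x a)) (xAO hm p x A) := by
  haveI := omtComm hm p
  haveI := omtAssoc hm p
  exact Finset.fold_insert h

theorem xAO_ne (A : Finset (Fin n)) (hA : A.Nonempty) : ∃ y, xAO hm p x A = some y := by
  induction A using Finset.induction_on with
  | empty => exact absurd hA (by simp)
  | @insert a A ha ih =>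
    rw [xAO_insert hm p x ha]
    rcases Finset.eq_empty_or_nonempty A with h | h
    · subst h; exact ⟨x a, rfl⟩
    · obtain ⟨y, hy⟩ := ih h
      rw [hy]
      exact ⟨mt hm p (x a) y, rfl⟩

theorem xA_singleton (i : Fin n) : xA hm p x {i} = x i := by
  have : xAO hm p x {i} = some (x i) := by
    have h : (i : Fin n) ∉ (∅ : Finset (Fin n)) := by simp
    rw [show ({i} : Finset (Fin n)) = insert i ∅ from rfl, xAO_insert hm p x h, xAO_empty]
    rfl
  rw [xA, this]
  rfl

theorem xA_insert {a : Fin n} {A : Finset (Fin n)} (hA : A.Nonempty) (h : a ∉ A) :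
    xA hm p x (insert a A) = mt hm p (x a) (xA hm p x A) := by
  obtain ⟨y, hy⟩ := xAO_ne hm p x A hA
  rw [xA, xAO_insert hm p x h, hy]
  rw [xA, hy]
  rfl

theorem xA_union {A E : Finset (Fin n)} (hA : A.Nonempty) (hdisj : Disjoint A E) :
    xA hm p x (A ∪ E) = mfold hm p x (xA hm p x A) E := by
  induction E using Finset.induction_on with
  | empty => rw [Finset.union_empty, mfold_empty]
  | @insert a E ha ih =>
    have hdisj' : Disjoint A E := by
      exact Finset.disjoint_of_subset_right (Finset.subset_insert a E) hdisj
    have haA : a ∉ A := by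
      intro hc
      exact (Finset.disjoint_left.mp hdisj) hc (Finset.mem_insert_self a E)
    have haAE : a ∉ A ∪ E := by
      simp only [Finset.mem_union]
      rintro (hc | hc)
      · exact haA hc
      · exact ha hc
    rw [Finset.union_insert, xA_insert hm p x (hA.mono Finset.subset_union_left) haAE,
      ih hdisj', mfold_insert hm p x ha]

theorem xA_pair (i j : Fin n) : xA hm p x ({i} ∪ {j}) = mt hm p (x i) (x j) := by
  by_cases h : i = j
  · subst h
    rw [Finset.union_self, xA_singleton, mt_self]
  · have hij : i ∉ ({j} : Finset (Fin n)) := by simpa using h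
    rw [show ({i} ∪ {j} : Finset (Fin n)) = insert i {j} by rw [Finset.insert_eq],
      xA_insert hm p x (Finset.singleton_nonempty j) hij, xA_singleton]

/-- `HH A = h(⋀_{i ∈ A} x i)`. -/
noncomputable def HH (A : Finset (Fin n)) : ℝ := dist p (xA hm p x A)

/-- Möbius coefficients. -/
noncomputable def gB (B : Finset (Fin n)) : ℝ :=
  ∑ C ∈ Finset.univ.powerset.filter (fun C => B ⊆ C), (-1 : ℝ) ^ (C \ B).card * HH hm p x C

theorem sum_pow_neg_one_real {α : Type*} [DecidableEq α] (s : Finset α) :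
    (∑ m ∈ s.powerset, (-1 : ℝ) ^ m.card) = if s = ∅ then 1 else 0 := by
  have h := Finset.sum_powerset_neg_one_pow_card (x := s)
  have h2 : (((∑ m ∈ s.powerset, (-1 : ℤ) ^ m.card) : ℤ) : ℝ)
      = ∑ m ∈ s.powerset, (-1 : ℝ) ^ m.card := by
    push_cast
    rfl
  rw [← h2, h]
  split_ifs <;> norm_num

theorem g_nonneg {B : Finset (Fin n)} (hB : B.Nonempty) : 0 ≤ gB hm p x B := by
  have reidx : gB hm p x B
      = ∑ E ∈ (Finset.univ \ B).powerset, (-1 : ℝ) ^ E.card * HH hm p x (B ∪ E) := by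
    rw [gB]
    refine Finset.sum_nbij' (fun C => C \ B) (fun E => B ∪ E) ?_ ?_ ?_ ?_ ?_
    · intro C hC
      rw [Finset.mem_filter, Finset.mem_powerset] at hC
      rw [Finset.mem_powerset]
      exact Finset.sdiff_subset_sdiff hC.1 (le_refl B)
    · intro E hE
      rw [Finset.mem_powerset] at hE
      rw [Finset.mem_filter, Finset.mem_powerset]
      exact ⟨Finset.subset_univ _, Finset.subset_union_left⟩
    · intro C hC
      rw [Finset.mem_filter] at hC
      exact Finset.union_sdiff_of_subset hC.2
    · intro E hE
      rw [Finset.mem_powerset] at hE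
      apply Finset.union_sdiff_cancel_left
      rw [Finset.disjoint_left]
      intro a haB haE
      have := hE haE
      rw [Finset.mem_sdiff] at this
      exact this.2 haB
    · intro C hC
      rw [Finset.mem_filter] at hC
      rw [Finset.union_sdiff_of_subset hC.2]
  rw [reidx]
  have hdisj : ∀ E ∈ (Finset.univ \ B).powerset, Disjoint B E := by
    intro E hE
    rw [Finset.mem_powerset] at hE
    rw [Finset.disjoint_left]
    intro a haB haE
    have := hE haE
    rw [Finset.mem_sdiff] at this
    exact this.2 haB
  have hval : ∀ E ∈ (Finset.univ \ B).powerset,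
      (-1 : ℝ) ^ E.card * HH hm p x (B ∪ E)
        = (-1 : ℝ) ^ E.card * dist p (mfold hm p x (xA hm p x B) E) := by
    intro E hE
    rw [HH, xA_union hm p x hB (hdisj E hE)]
  rw [Finset.sum_congr rfl hval]
  rcases Finset.eq_empty_or_nonempty (Finset.univ \ B) with h | h
  · rw [h]
    simp only [Finset.powerset_empty, Finset.sum_singleton, Finset.card_empty, pow_zero,
      one_mul, mfold_empty]
    exact dist_nonneg
  · obtain ⟨J, hJ⟩ := jpO_ne hm p x (xA hm p x B) (Finset.univ \ B) h
    rw [CM hm p x (xA hm p x B) (Finset.univ \ B) hJ]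
    have := h_mono (jpO_le hm p x (xA hm p x B) (Finset.univ \ B) hJ)
    linarith

theorem inversion (A : Finset (Fin n)) :
    (∑ B ∈ Finset.univ.powerset.filter (fun B => A ⊆ B), gB hm p x B) = HH hm p x A := by
  rw [Finset.sum_filter]
  have step1 : ∀ B ∈ Finset.univ.powerset,
      (if A ⊆ B then gB hm p x B else 0)
        = ∑ C ∈ Finset.univ.powerset,
            (if A ⊆ B ∧ B ⊆ C then (-1 : ℝ) ^ (C \ B).card * HH hm p x C else 0) := by
    intro B _
    by_cases h : A ⊆ B
    · simp only [h, if_true, true_and, gB, Finset.sum_filter]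
    · simp [h]
  rw [Finset.sum_congr rfl step1, Finset.sum_comm]
  have step2 : ∀ C ∈ Finset.univ.powerset,
      (∑ B ∈ Finset.univ.powerset,
          if A ⊆ B ∧ B ⊆ C then (-1 : ℝ) ^ (C \ B).card * HH hm p x C else 0)
        = (if A = C then (1 : ℝ) else 0) * HH hm p x C := by
    intro C _
    by_cases hAC : A ⊆ C
    · have e0 : (∑ B ∈ Finset.univ.powerset,
          if A ⊆ B ∧ B ⊆ C then (-1 : ℝ) ^ (C \ B).card * HH hm p x C else 0)
          = ∑ B ∈ C.powerset, if A ⊆ B then (-1 : ℝ) ^ (C \ B).card * HH hm p x C else 0 := by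
        have hvan : ∀ B ∈ Finset.univ.powerset, B ∉ C.powerset →
            (if A ⊆ B ∧ B ⊆ C then (-1 : ℝ) ^ (C \ B).card * HH hm p x C else 0) = 0 := by
          intro B _ hB
          rw [Finset.mem_powerset] at hB
          rw [if_neg]
          rintro ⟨_, h2⟩
          exact hB h2
        rw [← Finset.sum_subset (Finset.powerset_mono.mpr (Finset.subset_univ C)) hvan]
        apply Finset.sum_congr rfl
        intro B hB
        rw [Finset.mem_powerset] at hB
        simp [hB]
      rw [e0]
      have e1 : (∑ B ∈ C.powerset, if A ⊆ B then (-1 : ℝ) ^ (C \ B).card * HH hm p x C else 0)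
          = (∑ B ∈ C.powerset.filter (fun B => A ⊆ B), (-1 : ℝ) ^ (C \ B).card) * HH hm p x C := by
        rw [Finset.sum_mul, Finset.sum_filter]
      rw [e1]
      have e2 : (∑ B ∈ C.powerset.filter (fun B => A ⊆ B), (-1 : ℝ) ^ (C \ B).card)
          = ∑ D ∈ (C \ A).powerset, (-1 : ℝ) ^ D.card := by
        refine Finset.sum_nbij' (fun B => C \ B) (fun D => C \ D) ?_ ?_ ?_ ?_ ?_
        · intro B hB
          rw [Finset.mem_filter, Finset.mem_powerset] at hB
          rw [Finset.mem_powerset]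
          exact Finset.sdiff_subset_sdiff (le_refl C) hB.2
        · intro D hD
          rw [Finset.mem_powerset] at hD
          rw [Finset.mem_filter, Finset.mem_powerset]
          refine ⟨Finset.sdiff_subset, ?_⟩
          rw [Finset.subset_sdiff]
          refine ⟨hAC, ?_⟩
          rw [Finset.disjoint_left]
          intro a haA haD
          have := hD haD
          rw [Finset.mem_sdiff] at this
          exact this.2 haA
        · intro B hB
          rw [Finset.mem_filter, Finset.mem_powerset] at hB
          exact Finset.sdiff_sdiff_eq_self hB.1
        · intro D hD
          rw [Finset.mem_powerset] at hD
          exact Finset.sdiff_sdiff_eq_self (hD.trans Finset.sdiff_subset)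
        · intro B _
          rfl
      rw [e2, sum_pow_neg_one_real]
      have e3 : (C \ A = ∅) ↔ (A = C) := by
        rw [Finset.sdiff_eq_empty_iff_subset]
        constructor
        · intro h; exact Finset.Subset.antisymm hAC h
        · intro h; rw [h]
      by_cases h : C \ A = ∅
      · rw [if_pos h, if_pos (e3.mp h)]
      · rw [if_neg h, if_neg (fun hc => h (e3.mpr hc))]
    · have hz : ∀ B ∈ Finset.univ.powerset,
          (if A ⊆ B ∧ B ⊆ C then (-1 : ℝ) ^ (C \ B).card * HH hm p x C else 0) = 0 := by
        intro B _
        rw [if_neg]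
        rintro ⟨h1, h2⟩
        exact hAC (h1.trans h2)
      rw [Finset.sum_congr rfl hz, Finset.sum_const, smul_zero]
      rw [if_neg (fun hc => hAC (by rw [hc]))]
      ring
  rw [Finset.sum_congr rfl step2]
  have e4 : ∀ C ∈ Finset.univ.powerset,
      (if A = C then (1 : ℝ) else 0) * HH hm p x C
        = if A = C then HH hm p x C else 0 := by
    intro C _
    split_ifs <;> ring
  rw [Finset.sum_congr rfl e4, Finset.sum_ite_eq]
  rw [if_pos (Finset.mem_powerset.mpr (Finset.subset_univ A))]

/-- The quadratic form identity. -/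
theorem quad_form (lam : Fin n → ℝ) :
    (∑ i, ∑ j, lam i * lam j * HH hm p x ({i} ∪ {j}))
      = ∑ B ∈ Finset.univ.powerset, gB hm p x B * (∑ i ∈ B, lam i) ^ 2 := by
  have e1 : ∀ i j : Fin n, HH hm p x ({i} ∪ {j})
      = ∑ B ∈ Finset.univ.powerset, (if i ∈ B ∧ j ∈ B then gB hm p x B else 0) := by
    intro i j
    rw [← inversion hm p x ({i} ∪ {j}), Finset.sum_filter]
    apply Finset.sum_congr rfl
    intro B _
    congr 1
    simp [Finset.union_subset_iff, Finset.insert_subset_iff]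
  have e2 : (∑ i, ∑ j, lam i * lam j * HH hm p x ({i} ∪ {j}))
      = ∑ i, ∑ j, ∑ B ∈ Finset.univ.powerset,
          lam i * lam j * (if i ∈ B ∧ j ∈ B then gB hm p x B else 0) := by
    apply Finset.sum_congr rfl; intro i _
    apply Finset.sum_congr rfl; intro j _
    rw [e1, Finset.mul_sum]
  rw [e2]
  have e3 : ∀ i : Fin n,
      (∑ j, ∑ B ∈ Finset.univ.powerset,
          lam i * lam j * (if i ∈ B ∧ j ∈ B then gB hm p x B else 0))
        = ∑ B ∈ Finset.univ.powerset, ∑ j,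
            lam i * lam j * (if i ∈ B ∧ j ∈ B then gB hm p x B else 0) := by
    intro i
    exact Finset.sum_comm
  rw [Finset.sum_congr rfl (fun i _ => e3 i), Finset.sum_comm]
  apply Finset.sum_congr rfl
  intro B _
  have e5 : ∀ i j : Fin n, lam i * lam j * (if i ∈ B ∧ j ∈ B then gB hm p x B else 0)
      = gB hm p x B * ((if i ∈ B then lam i else 0) * (if j ∈ B then lam j else 0)) := by
    intro i j
    by_cases h1 : i ∈ B <;> by_cases h2 : j ∈ B <;> simp [h1, h2] <;> ring
  have e6 : (∑ i, ∑ j, lam i * lam j * (if i ∈ B ∧ j ∈ B then gB hm p x B else 0))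
      = gB hm p x B * ((∑ i, if i ∈ B then lam i else 0) * (∑ j, if j ∈ B then lam j else 0)) := by
    rw [Finset.sum_mul_sum, Finset.mul_sum]
    apply Finset.sum_congr rfl
    intro i _
    rw [Finset.mul_sum]
    apply Finset.sum_congr rfl
    intro j _
    exact e5 i j
  rw [e6]
  have e7 : (∑ i, if i ∈ B then lam i else 0) = ∑ i ∈ B, lam i := by
    rw [Finset.sum_ite_mem, Finset.univ_inter]
  rw [e7, sq]

theorem psd (lam : Fin n → ℝ) :
    0 ≤ ∑ i, ∑ j, lam i * lam j * HH hm p x ({i} ∪ {j}) := by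
  rw [quad_form hm p x lam]
  apply Finset.sum_nonneg
  intro B _
  rcases Finset.eq_empty_or_nonempty B with h | h
  · subst h; simp
  · exact mul_nonneg (g_nonneg hm p x h) (sq_nonneg _)

end MedianND

namespace MedianND

/-- Real-coefficient negative definiteness. -/
theorem nd_real {X : Type*} [MetricSpace X] (hm : IsMedianSpace X)
    {n : ℕ} (x : Fin n → X) (a : Fin n → ℝ) (ha : ∑ i, a i = 0) :
    (∑ i, ∑ j, a i * a j * dist (x i) (x j)) ≤ 0 := by
  rcases Nat.eq_zero_or_pos n with hn | hn
  · subst hn; simp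
  · set p := x ⟨0, hn⟩ with hp
    have key : ∀ i j : Fin n, a i * a j * dist (x i) (x j)
        = a i * a j * dist p (x i) + a i * a j * dist p (x j)
          - 2 * (a i * a j * HH hm p x ({i} ∪ {j})) := by
      intro i j
      have h1 := dist_mt hm p (x i) (x j)
      have h2 : HH hm p x ({i} ∪ {j}) = dist p (mt hm p (x i) (x j)) := by
        rw [HH, xA_pair]
      rw [h2, h1]
      ring
    have split : (∑ i, ∑ j, a i * a j * dist (x i) (x j))
        = (∑ i, ∑ j, a i * a j * dist p (x i))
          + (∑ i, ∑ j, a i * a j * dist p (x j))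
          - 2 * (∑ i, ∑ j, a i * a j * HH hm p x ({i} ∪ {j})) := by
      have inner : ∀ i : Fin n, (∑ j, a i * a j * dist (x i) (x j))
          = (∑ j, a i * a j * dist p (x i)) + (∑ j, a i * a j * dist p (x j))
            - 2 * (∑ j, a i * a j * HH hm p x ({i} ∪ {j})) := by
        intro i
        rw [Finset.sum_congr rfl (fun j _ => key i j), Finset.sum_sub_distrib,
          Finset.sum_add_distrib, ← Finset.mul_sum]
      rw [Finset.sum_congr rfl (fun i _ => inner i), Finset.sum_sub_distrib,
        Finset.sum_add_distrib, ← Finset.mul_sum]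
    have z1 : (∑ i, ∑ j, a i * a j * dist p (x i)) = 0 := by
      have : ∀ i : Fin n, (∑ j, a i * a j * dist p (x i)) = 0 := by
        intro i
        have : (∑ j, a i * a j * dist p (x i)) = (a i * dist p (x i)) * ∑ j, a j := by
          rw [Finset.mul_sum]
          apply Finset.sum_congr rfl
          intro j _
          ring
        rw [this, ha, mul_zero]
      rw [Finset.sum_congr rfl (fun i _ => this i), Finset.sum_const, smul_zero]
    have z2 : (∑ i, ∑ j, a i * a j * dist p (x j)) = 0 := by
      have e : ∀ i : Fin n, (∑ j, a i * a j * dist p (x j))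
          = a i * ∑ j, a j * dist p (x j) := by
        intro i
        rw [Finset.mul_sum]
        apply Finset.sum_congr rfl
        intro j _
        ring
      rw [Finset.sum_congr rfl (fun i _ => e i), ← Finset.sum_mul, ha, zero_mul]
    have hpsd := psd hm p x a
    rw [split, z1, z2]
    linarith

end MedianND

/-- The distance of a median space is a negative definite kernel. -/
theorem stmt7 {X : Type*} [MetricSpace X] (hmed : IsMedianSpace X)
    (n : ℕ) (x : Fin n → X) (lam : Fin n → ℂ) (hsum : ∑ i, lam i = 0) :
    (∑ i, ∑ j, lam i * (starRingEnd ℂ) (lam j) * ((dist (x i) (x j) : ℝ) : ℂ)).re ≤ 0 := by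
  have hare : (∑ i, (lam i).re) = 0 := by
    have h : (∑ i, lam i).re = (0 : ℂ).re := by rw [hsum]
    rwa [Complex.re_sum] at h
  have hbim : (∑ i, (lam i).im) = 0 := by
    have h : (∑ i, lam i).im = (0 : ℂ).im := by rw [hsum]
    rwa [Complex.im_sum] at h
  have key : ∀ i j : Fin n,
      (lam i * (starRingEnd ℂ) (lam j) * ((dist (x i) (x j) : ℝ) : ℂ)).re
        = (lam i).re * (lam j).re * dist (x i) (x j)
          + (lam i).im * (lam j).im * dist (x i) (x j) := by
    intro i j
    simp only [Complex.mul_re, Complex.mul_im, Complex.conj_re, Complex.conj_im,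
      Complex.ofReal_re, Complex.ofReal_im]
    ring
  rw [Complex.re_sum]
  have h1 : ∀ i : Fin n,
      (∑ j, lam i * (starRingEnd ℂ) (lam j) * ((dist (x i) (x j) : ℝ) : ℂ)).re
        = ∑ j, (lam i * (starRingEnd ℂ) (lam j) * ((dist (x i) (x j) : ℝ) : ℂ)).re := by
    intro i
    rw [Complex.re_sum]
  rw [Finset.sum_congr rfl (fun i _ => h1 i)]
  rw [Finset.sum_congr rfl (fun i _ => Finset.sum_congr rfl (fun j _ => key i j))]
  have split : (∑ i, ∑ j, ((lam i).re * (lam j).re * dist (x i) (x j)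
        + (lam i).im * (lam j).im * dist (x i) (x j)))
      = (∑ i, ∑ j, (lam i).re * (lam j).re * dist (x i) (x j))
        + (∑ i, ∑ j, (lam i).im * (lam j).im * dist (x i) (x j)) := by
    rw [← Finset.sum_add_distrib]
    apply Finset.sum_congr rfl
    intro i _
    rw [← Finset.sum_add_distrib]
  rw [split]
  have n1 := MedianND.nd_real hmed x (fun i => (lam i).re) hare
  have n2 := MedianND.nd_real hmed x (fun i => (lam i).im) hbim
  linarith
end

section
/- Let X be a complete median space and let C₁, C₂ ⊆ X be nonempty closed convex subsets. Then the convex hull of C₁ ∪ C₂ (the smallest convex subset of X containing C₁ ∪ C₂) is closed. -/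
open Set Metric MeasureTheory

section Basic
variable {X : Type*} [MetricSpace X]

lemma mem_mi {a b c : X} : c ∈ mInterval a b ↔ dist a b = dist a c + dist c b := Iff.rfl

lemma btw_left {a b : X} : a ∈ mInterval a b := by simp [mem_mi]

lemma btw_right {a b : X} : b ∈ mInterval a b := by simp [mem_mi]

lemma btw_symm {a b x : X} (h : x ∈ mInterval a b) : x ∈ mInterval b a := by
  rw [mem_mi] at *
  rw [dist_comm b a, dist_comm b x, dist_comm x a]
  linarith

lemma r1a {a b x y : X} (h1 : x ∈ mInterval a b) (h2 : y ∈ mInterval a x) :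
    y ∈ mInterval a b := by
  rw [mem_mi] at *
  have t1 : dist y b ≤ dist y x + dist x b := dist_triangle y x b
  have t2 : dist a b ≤ dist a y + dist y b := dist_triangle a y b
  linarith

lemma r1b {a b x y : X} (h1 : x ∈ mInterval a b) (h2 : y ∈ mInterval a x) :
    x ∈ mInterval y b := by
  rw [mem_mi] at *
  have t1 : dist y b ≤ dist y x + dist x b := dist_triangle y x b
  have t2 : dist a b ≤ dist a y + dist y b := dist_triangle a y b
  linarith

lemma med_unique (hmed : IsMedianSpace X) {p q r w w' : X}
    (h1 : w ∈ mInterval p q) (h2 : w ∈ mInterval p r) (h3 : w ∈ mInterval q r)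
    (h4 : w' ∈ mInterval p q) (h5 : w' ∈ mInterval p r) (h6 : w' ∈ mInterval q r) :
    w = w' :=
  (hmed p q r).unique ⟨h1, h2, h3⟩ ⟨h4, h5, h6⟩

end Basic

section Gate
variable {X : Type*} [MetricSpace X] [CompleteSpace X]

lemma exists_gate (hmed : IsMedianSpace X) {C : Set X} (hne : C.Nonempty)
    (hcl : IsClosed C) (hcv : MedConvex C) (x : X) :
    ∃ p, p ∈ C ∧ ∀ c ∈ C, p ∈ mInterval x c := by
  set r := infDist x C with hr
  have hseq : ∀ n : ℕ, ∃ c, c ∈ C ∧ dist x c < r + 1/(n+1) := by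
    intro n
    have hlt : r < r + 1/(n+1) := by
      have : (0:ℝ) < 1/((n:ℝ)+1) := by positivity
      linarith
    obtain ⟨c, hc, hd⟩ := (Metric.infDist_lt_iff hne).mp hlt
    exact ⟨c, hc, hd⟩
  choose c hcC hcd using hseq
  have hlb : ∀ n, r ≤ dist x (c n) := fun n => Metric.infDist_le_dist_of_mem (hcC n)
  have key : ∀ m n : ℕ, dist (c m) (c n) ≤ (dist x (c m) - r) + (dist x (c n) - r) := by
    intro m n
    obtain ⟨w, ⟨h1, h2, h3⟩, -⟩ := hmed x (c m) (c n)
    have hwC : w ∈ C := hcv _ (hcC m) _ (hcC n) h3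
    have hw : r ≤ dist x w := Metric.infDist_le_dist_of_mem hwC
    rw [mem_mi] at h1 h2 h3
    have hcm := dist_comm w (c m)
    linarith
  have hcauchy : CauchySeq c := by
    rw [Metric.cauchySeq_iff]
    intro ε hε
    obtain ⟨N, hN⟩ := exists_nat_one_div_lt (half_pos hε)
    refine ⟨N, fun m hm n hn => ?_⟩
    have hm1 : (1:ℝ)/((m:ℝ)+1) ≤ 1/((N:ℝ)+1) := by
      apply one_div_le_one_div_of_le
      · positivity
      · have : (N:ℝ) ≤ (m:ℝ) := by exact_mod_cast hm
        linarith
    have hn1 : (1:ℝ)/((n:ℝ)+1) ≤ 1/((N:ℝ)+1) := by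
      apply one_div_le_one_div_of_le
      · positivity
      · have : (N:ℝ) ≤ (n:ℝ) := by exact_mod_cast hn
        linarith
    have h1 := hcd m
    have h2 := hcd n
    have h3 := key m n
    linarith
  obtain ⟨p, hp⟩ := cauchySeq_tendsto_of_complete hcauchy
  have hpC : p ∈ C := hcl.mem_of_tendsto hp (Filter.Eventually.of_forall hcC)
  have hxp : dist x p = r := by
    have h1 : Filter.Tendsto (fun n => dist x (c n)) Filter.atTop (nhds (dist x p)) :=
      Filter.Tendsto.dist tendsto_const_nhds hp
    apply le_antisymm
    · have h2 : Filter.Tendsto (fun n : ℕ => r + 1/((n:ℝ)+1)) Filter.atTop (nhds r) := by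
        have h3 : Filter.Tendsto (fun n : ℕ => 1 / ((n : ℝ) + 1)) Filter.atTop (nhds 0) :=
          tendsto_one_div_add_atTop_nhds_zero_nat
        have h4 := Filter.Tendsto.add (tendsto_const_nhds (x := r) (f := Filter.atTop (α := ℕ))) h3
        simpa using h4
      exact le_of_tendsto_of_tendsto' h1 h2 (fun n => (hcd n).le)
    · exact ge_of_tendsto' h1 hlb
  refine ⟨p, hpC, fun cc hcc => ?_⟩
  obtain ⟨w, ⟨h1, h2, h3⟩, -⟩ := hmed x p cc
  have hwC : w ∈ C := hcv _ hpC _ hcc h3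
  have hw : r ≤ dist x w := Metric.infDist_le_dist_of_mem hwC
  have hwp : w = p := by
    rw [mem_mi] at h1
    have h0 : dist w p = 0 := by have := dist_nonneg (x := w) (y := p); linarith
    exact dist_eq_zero.mp h0
  rw [← hwp]
  exact h2

end Gate

theorem subgem {X : Type*} [MetricSpace X] (hmed : IsMedianSpace X) {a b x y z u : X}
    (hx : x ∈ mInterval a b) (hz : z ∈ mInterval x y)
    (hu1 : u ∈ mInterval a y) (hu2 : u ∈ mInterval a z) (hu3 : u ∈ mInterval y z) :
    z ∈ mInterval u b := by
  have h1 : z ∈ mInterval x u := btw_symm (r1b (btw_symm hz) hu3)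
  obtain ⟨w1, ⟨h2, h3, h4⟩, -⟩ := hmed a b z
  obtain ⟨w2, ⟨h5, h6, h7⟩, -⟩ := hmed b x z
  have h8 : w2 ∈ mInterval a b := btw_symm (r1a (btw_symm hx) h5)
  have h9 : z ∈ mInterval u w2 := btw_symm (r1b h1 h7)
  obtain ⟨w3, ⟨h10, h11, h12⟩, -⟩ := hmed b z u
  have h13 : w3 ∈ mInterval a z := btw_symm (r1a (btw_symm hu2) h12)
  obtain ⟨w4, ⟨h14, h15, h16⟩, -⟩ := hmed a b w3
  have h17 : w4 ∈ mInterval a z := r1a h13 h15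
  have h18 : w4 ∈ mInterval b z := r1a h10 h16
  have h19 : w4 ∈ mInterval b u := r1a h11 h16
  have e1 : w4 = w1 := med_unique hmed h14 h17 h18 h2 h3 h4
  have h20 : w1 ∈ mInterval b u := by have hh := h19; rw [e1] at hh; exact hh
  obtain ⟨w5, ⟨h21, h22, h23⟩, -⟩ := hmed a z w2
  have h24 : w5 ∈ mInterval a b := r1a h8 h22
  have h25 : w5 ∈ mInterval b z := btw_symm (r1a (btw_symm h6) h23)
  have h26 : z ∈ mInterval u w5 := btw_symm (r1b (btw_symm h9) (btw_symm h23))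
  have e2 : w5 = w1 := med_unique hmed h24 h21 h25 h2 h3 h4
  have h27 : w5 ∈ mInterval b u := by have hh := h20; rw [← e2] at hh; exact hh
  have h28 : z ∈ mInterval b u := btw_symm (r1a (btw_symm h27) h26)
  exact (btw_symm h28)


theorem gem {X : Type*} [MetricSpace X] (hmed : IsMedianSpace X) {a b c d x y z u v : X}
    (hx : x ∈ mInterval a b) (hy : y ∈ mInterval c d) (hz : z ∈ mInterval x y)
    (hu1 : u ∈ mInterval a c) (hu2 : u ∈ mInterval a z) (hu3 : u ∈ mInterval c z)
    (hv1 : v ∈ mInterval b d) (hv2 : v ∈ mInterval b z) (hv3 : v ∈ mInterval d z) :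
    z ∈ mInterval u v := by
  have h1 : x ∈ mInterval b x := btw_right
  obtain ⟨w1, ⟨h2, h3, h4⟩, -⟩ := hmed a x v
  have h5 : x ∈ mInterval x w1 := btw_left
  have h6 : x ∈ mInterval b w1 := btw_symm (r1b hx h2)
  have h7 : w1 ∈ mInterval x z := subgem hmed hv2 (btw_symm h4) h1 h6 h5
  have h8 : z ∈ mInterval y w1 := btw_symm (r1b hz h7)
  obtain ⟨w2, ⟨h9, h10, h11⟩, -⟩ := hmed a y z
  have h12 : z ∈ mInterval v w2 := btw_symm (subgem hmed h3 (btw_symm h8) h9 h10 h11)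
  obtain ⟨w3, ⟨h13, h14, h15⟩, -⟩ := hmed a z v
  have h16 : w3 ∈ mInterval d w3 := btw_right
  have h17 : w3 ∈ mInterval z w3 := btw_right
  have h18 : w3 ∈ mInterval d z := btw_symm (r1a (btw_symm hv3) h15)
  have h19 : z ∈ mInterval y w3 := btw_symm (subgem hmed h9 (btw_symm h12) h14 h13 (btw_symm h15))
  have h20 : z ∈ mInterval c w3 := btw_symm (subgem hmed (btw_symm hy) h19 h16 h18 (btw_symm h17))
  have h21 : z ∈ mInterval u v := subgem hmed h14 (btw_symm h20) hu1 hu2 hu3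
  exact h21


/-- In a complete median space, the convex hull of the union of two nonempty
closed convex subsets is closed. -/
theorem stmt10 {X : Type*} [MetricSpace X] [CompleteSpace X]
    (hmed : IsMedianSpace X)
    (C₁ C₂ : Set X) (h₁ne : C₁.Nonempty) (h₂ne : C₂.Nonempty)
    (h₁cl : IsClosed C₁) (h₂cl : IsClosed C₂)
    (h₁cv : MedConvex C₁) (h₂cv : MedConvex C₂) :
    IsClosed (⋂₀ {C : Set X | MedConvex C ∧ C₁ ∪ C₂ ⊆ C}) := by
  choose g₁ hg₁C hg₁b using fun x => exists_gate hmed h₁ne h₁cl h₁cv x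
  choose g₂ hg₂C hg₂b using fun x => exists_gate hmed h₂ne h₂cl h₂cv x
  -- gates are 1-Lipschitz
  have lip : ∀ (g : X → X) (C : Set X), (∀ x, g x ∈ C) → (∀ x, ∀ c ∈ C, g x ∈ mInterval x c) →
      ∀ x y, dist (g x) (g y) ≤ dist x y := by
    intro g C hgC hgb x y
    have h1 := hgb x (g y) (hgC y)
    have h2 := hgb y (g x) (hgC x)
    rw [mem_mi] at h1 h2
    have t1 := dist_triangle x y (g y)
    have t2 := dist_triangle y x (g x)
    have c1 := dist_comm (g y) (g x)
    have c2 := dist_comm y x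
    linarith
  have cont : ∀ (g : X → X) (C : Set X), (∀ x, g x ∈ C) → (∀ x, ∀ c ∈ C, g x ∈ mInterval x c) →
      Continuous g := by
    intro g C hgC hgb
    apply LipschitzWith.continuous (K := 1)
    apply LipschitzWith.of_dist_le_mul
    intro x y
    simpa using lip g C hgC hgb x y
  have cont₁ : Continuous g₁ := cont g₁ C₁ hg₁C hg₁b
  have cont₂ : Continuous g₂ := cont g₂ C₂ hg₂C hg₂b
  -- gate trick
  have trick : ∀ (g : X → X) (C : Set X), (∀ x, ∀ c ∈ C, g x ∈ mInterval x c) →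
      ∀ z w c, c ∈ C → z ∈ mInterval c w → z ∈ mInterval (g z) w := by
    intro g C hgb z w c hc h
    have hp := hgb z c hc
    rw [mem_mi] at *
    have t1 := dist_triangle (g z) z w
    have t2 := dist_triangle c (g z) w
    have c1 := dist_comm z c
    have c2 := dist_comm (g z) c
    have c3 := dist_comm (g z) z
    linarith
  -- gates fix members
  have fix : ∀ (g : X → X) (C : Set X), (∀ x, ∀ c ∈ C, g x ∈ mInterval x c) →
      ∀ a ∈ C, g a = a := by
    intro g C hgb a ha
    have h := hgb a a ha
    rw [mem_mi] at h
    simp only [dist_self] at h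
    have n1 := dist_nonneg (x := a) (y := g a)
    have n2 := dist_nonneg (x := g a) (y := a)
    have h0 : dist (g a) a = 0 := by linarith
    exact dist_eq_zero.mp h0
  set K := {z : X | z ∈ mInterval (g₁ z) (g₂ z)} with hK
  have hKclosed : IsClosed K := by
    have heq : K = {z : X | dist (g₁ z) (g₂ z) = dist (g₁ z) z + dist z (g₂ z)} := rfl
    rw [heq]
    exact isClosed_eq (cont₁.dist cont₂) ((cont₁.dist continuous_id).add (continuous_id.dist cont₂))
  have hKconv : MedConvex K := by
    intro x hx y hy z hz
    obtain ⟨u, ⟨hu1, hu2, hu3⟩, -⟩ := hmed (g₁ x) (g₁ y) z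
    obtain ⟨v, ⟨hv1, hv2, hv3⟩, -⟩ := hmed (g₂ x) (g₂ y) z
    have huC : u ∈ C₁ := h₁cv _ (hg₁C x) _ (hg₁C y) hu1
    have hvC : v ∈ C₂ := h₂cv _ (hg₂C x) _ (hg₂C y) hv1
    have hzuv : z ∈ mInterval u v := gem hmed hx hy hz hu1 hu2 hu3 hv1 hv2 hv3
    have s1 : z ∈ mInterval (g₁ z) v := trick g₁ C₁ hg₁b z v u huC hzuv
    have s2 : z ∈ mInterval (g₂ z) (g₁ z) := trick g₂ C₂ hg₂b z (g₁ z) v hvC (btw_symm s1)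
    exact btw_symm s2
  have hsubK : C₁ ∪ C₂ ⊆ K := by
    rintro a (ha | ha)
    · show a ∈ mInterval (g₁ a) (g₂ a)
      rw [fix g₁ C₁ hg₁b a ha]
      exact btw_left
    · show a ∈ mInterval (g₁ a) (g₂ a)
      rw [fix g₂ C₂ hg₂b a ha]
      exact btw_right
  have hKsub : ∀ C : Set X, MedConvex C → C₁ ∪ C₂ ⊆ C → K ⊆ C := by
    intro C hCc hCs z hz
    exact hCc _ (hCs (Or.inl (hg₁C z))) _ (hCs (Or.inr (hg₂C z))) hz
  have hfinal : ⋂₀ {C : Set X | MedConvex C ∧ C₁ ∪ C₂ ⊆ C} = K := by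
    apply Set.Subset.antisymm
    · intro z hz
      exact (Set.mem_sInter.mp hz) K ⟨hKconv, hsubK⟩
    · intro z hz
      rw [Set.mem_sInter]
      rintro C ⟨hC1, hC2⟩
      exact hKsub C hC1 hC2 hz
  rw [hfinal]
  exact hKclosed
end
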